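/- The k-variance of piecewise constant approximations bounds the clustering quality: let y¹,...,y^m ∈ ℝ^r be the rows of the m×r matrix Y whose columns are unit vectors y₁,...,y_r ∈ ℝ^m, let {A₁,...,A_a} be a partition of {1,...,m}, and let F be the subspace of vectors in ℝ^m constant on each A_i. Then the a-variance S_a²(Y) := min over a-partitions of Σ_i Σ_{j∈A'_i} ‖y^j − ȳ^i‖² (ȳ^i the mean of the representatives over A'_i) satisfies S_a²(Y) ≤ Σ_{i=1}^r dist²(y_i, F). -/

import Mathlib

noncomputable def enormR {m : ℕ} (v : Fin m → ℝ) : ℝ := Real.sqrt (∑ i, v i ^ 2)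

/-- Euclidean distance from a vector to a subspace of `ℝ^m`. -/
noncomputable def distSub {m : ℕ} (y : Fin m → ℝ) (F : Submodule ℝ (Fin m → ℝ)) : ℝ :=
  ⨅ f : F, enormR (y - (f : Fin m → ℝ))

/-- The subspace of vectors of `ℝ^m` that are constant on each block of the
partition induced by `φ`. -/
def constOn {m a : ℕ} (φ : Fin m → Fin a) : Submodule ℝ (Fin m → ℝ) where
  carrier := {w | ∀ j j', φ j = φ j' → w j = w j'}
  add_mem' := by
    intro w1 w2 h1 h2 j j' hj
    simp [h1 j j' hj, h2 j j' hj]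
  zero_mem' := by intro j j' hj; rfl
  smul_mem' := by
    intro c w h j j' hj
    simp [h j j' hj]

/-- The cost of a clustering `ψ` of the representatives `rep`. -/
noncomputable def clusterCost {m a r : ℕ} (rep : Fin m → Fin r → ℝ)
    (ψ : Fin m → Fin a) : ℝ :=
  ∑ j, (enormR (rep j - fun kk =>
      (∑ j' ∈ Finset.univ.filter (fun x => ψ x = ψ j), rep j' kk) /
        ((Finset.univ.filter (fun x => ψ x = ψ j)).card : ℝ))) ^ 2

lemma enorm_sq {m : ℕ} (v : Fin m → ℝ) : enormR v ^ 2 = ∑ i, v i ^ 2 := by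
  rw [enormR, Real.sq_sqrt (Finset.sum_nonneg fun i _ => sq_nonneg _)]

/-- On a single block, the mean minimizes the sum of squared deviations. -/
lemma block_min {m : ℕ} (B : Finset (Fin m)) (v : Fin m → ℝ) (t : ℝ) :
    ∑ j ∈ B, (v j - (∑ j' ∈ B, v j') / (B.card : ℝ)) ^ 2 ≤ ∑ j ∈ B, (v j - t) ^ 2 := by
  rcases B.eq_empty_or_nonempty with rfl | hB
  · simp
  have hn : (0 : ℝ) < (B.card : ℝ) := by
    exact_mod_cast Finset.card_pos.mpr hB
  set n : ℝ := (B.card : ℝ) with hn'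
  set S : ℝ := ∑ j' ∈ B, v j' with hS
  set μ : ℝ := S / n with hμ
  have hnμ : n * μ = S := by rw [hμ]; field_simp [hn.ne']
  have expand : ∀ c : ℝ, ∑ j ∈ B, (v j - c) ^ 2
      = (∑ j ∈ B, v j ^ 2) - 2 * c * S + n * c ^ 2 := by
    intro c
    have : ∀ j ∈ B, (v j - c) ^ 2 = v j ^ 2 - 2 * c * v j + c ^ 2 := by
      intro j _; ring
    rw [Finset.sum_congr rfl this, Finset.sum_add_distrib, Finset.sum_sub_distrib,
      Finset.sum_const, ← Finset.mul_sum, ← hS]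
    push_cast
    ring
  rw [expand μ, expand t]
  have ht : t * (n * μ) = t * S := by rw [hnμ]
  have hμ2 : μ * (n * μ) = μ * S := by rw [hnμ]
  nlinarith [mul_nonneg hn.le (sq_nonneg (t - μ)), ht, hμ2]

lemma key {m a : ℕ} (φ : Fin m → Fin a) (v f : Fin m → ℝ)
    (hf : ∀ j j', φ j = φ j' → f j = f j') :
    ∑ j, (v j - (∑ j' ∈ Finset.univ.filter (fun x => φ x = φ j), v j') /
        ((Finset.univ.filter (fun x => φ x = φ j)).card : ℝ)) ^ 2
      ≤ ∑ j, (v j - f j) ^ 2 := by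
  classical
  rw [← Finset.sum_fiberwise Finset.univ φ (fun j => (v j - f j) ^ 2),
    ← Finset.sum_fiberwise Finset.univ φ
      (fun j => (v j - (∑ j' ∈ Finset.univ.filter (fun x => φ x = φ j), v j') /
        ((Finset.univ.filter (fun x => φ x = φ j)).card : ℝ)) ^ 2)]
  apply Finset.sum_le_sum
  intro c _
  set B : Finset (Fin m) := Finset.univ.filter (fun x => φ x = c) with hB
  rcases B.eq_empty_or_nonempty with hBe | hBne
  · simp [hBe]
  obtain ⟨j₀, hj₀⟩ := hBne
  have hj₀c : φ j₀ = c := (Finset.mem_filter.mp hj₀).2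
  have hLHS : ∑ j ∈ B, (v j - (∑ j' ∈ Finset.univ.filter (fun x => φ x = φ j), v j') /
        ((Finset.univ.filter (fun x => φ x = φ j)).card : ℝ)) ^ 2
      = ∑ j ∈ B, (v j - (∑ j' ∈ B, v j') / (B.card : ℝ)) ^ 2 := by
    apply Finset.sum_congr rfl
    intro j hj
    have hjc : φ j = c := (Finset.mem_filter.mp hj).2
    rw [hjc]
  have hRHS : ∑ j ∈ B, (v j - f j) ^ 2 = ∑ j ∈ B, (v j - f j₀) ^ 2 := by
    apply Finset.sum_congr rfl
    intro j hj
    have hjc : φ j = c := (Finset.mem_filter.mp hj).2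
    rw [hf j j₀ (hjc.trans hj₀c.symm)]
  rw [hLHS, hRHS]
  exact block_min B v (f j₀)

/-- The `a`-variance (minimum clustering cost over all `a`-partitions) of the row
representatives of `Y` is bounded by `Σ_i dist²(y_i, F)`, where `F` is the
subspace of vectors constant on each block of the partition `φ`. -/
theorem stmt11 {m a r : ℕ} [NeZero a] (y : Fin r → Fin m → ℝ)
    (hunit : ∀ i, enormR (y i) = 1)
    (φ : Fin m → Fin a) (hφ : Function.Surjective φ) :
    (⨅ ψ : Fin m → Fin a, clusterCost (fun j k => y k j) ψ) ≤
      ∑ i, (distSub (y i) (constOn φ)) ^ 2 := by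
  classical
  have hbdd : BddBelow (Set.range fun ψ : Fin m → Fin a =>
      clusterCost (fun j k => y k j) ψ) := by
    refine ⟨0, ?_⟩
    rintro x ⟨ψ, rfl⟩
    exact Finset.sum_nonneg fun j _ => sq_nonneg _
  refine le_trans (ciInf_le hbdd φ) ?_
  -- Rewrite the cost for ψ = φ as a sum over coordinates k
  have hcost : clusterCost (fun j k => y k j) φ
      = ∑ k, ∑ j, (y k j - (∑ j' ∈ Finset.univ.filter (fun x => φ x = φ j), y k j') /
          ((Finset.univ.filter (fun x => φ x = φ j)).card : ℝ)) ^ 2 := by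
    rw [clusterCost]
    rw [Finset.sum_comm]
    apply Finset.sum_congr rfl
    intro j _
    rw [enorm_sq]
    apply Finset.sum_congr rfl
    intro k _
    simp
  rw [hcost]
  apply Finset.sum_le_sum
  intro k _
  -- per-coordinate inequality against the squared distance
  set T : ℝ := ∑ j, (y k j - (∑ j' ∈ Finset.univ.filter (fun x => φ x = φ j), y k j') /
      ((Finset.univ.filter (fun x => φ x = φ j)).card : ℝ)) ^ 2 with hT
  have hT0 : 0 ≤ T := Finset.sum_nonneg fun j _ => sq_nonneg _
  have hle : Real.sqrt T ≤ distSub (y k) (constOn φ) := by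
    rw [distSub]
    apply le_ciInf
    intro f
    rw [enormR]
    apply Real.sqrt_le_sqrt
    have hf : ∀ j j', φ j = φ j' → (f : Fin m → ℝ) j = (f : Fin m → ℝ) j' := f.2
    have := key φ (y k) (f : Fin m → ℝ) hf
    calc T ≤ ∑ j, (y k j - (f : Fin m → ℝ) j) ^ 2 := this
      _ = ∑ j, ((y k - (f : Fin m → ℝ)) j) ^ 2 := by simp [Pi.sub_apply]
  have hs : Real.sqrt T ^ 2 ≤ distSub (y k) (constOn φ) ^ 2 :=
    pow_le_pow_left₀ (Real.sqrt_nonneg _) hle 2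
  rwa [Real.sq_sqrt hT0] at hs
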